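/- (Carrier–Greenspan linearization.) Let Ω ⊂ ℝ² be open, let η, u : Ω → ℝ be C¹ solutions of the shallow water system η_t + (1 + η_x)u + c(x + η)u_x = 0 and u_t + u u_x + η_x = 0 on Ω, where c : ℝ → ℝ is C¹. Suppose the hodograph map Φ(x, t) := (x + η(x,t), t − u(x,t)) is a C¹ diffeomorphism from Ω onto an open set Ω' ⊂ ℝ². Define φ, ψ : Ω' → ℝ by φ(σ, τ) = u(x, t) and ψ(σ, τ) = η(x, t) + u(x, t)²/2 whenever (σ, τ) = Φ(x, t). Then on Ω' the pair (φ, ψ) satisfies the linear hyperbolic system φ_τ + ψ_σ = 0 and ψ_τ + c(σ) φ_σ + φ = 0; equivalently, writing 𝛟 = (φ, ψ)ᵀ, A(σ) = [[0, 1], [c(σ), 0]], B = [[0, 0], [1, 0]], one has 𝛟_τ + A(σ) 𝛟_σ + B 𝛟 = 0. -/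

import Mathlib

private lemma clm_eval {E : Type*} [NormedAddCommGroup E] [NormedSpace ℝ E]
    (L : ℝ × ℝ →L[ℝ] E) (v : ℝ × ℝ) :
    L v = v.1 • L (1, 0) + v.2 • L (0, 1) := by
  have hv : v = v.1 • ((1:ℝ), (0:ℝ)) + v.2 • ((0:ℝ), (1:ℝ)) := by
    simp [Prod.ext_iff]
  calc L v = L (v.1 • ((1:ℝ), (0:ℝ)) + v.2 • ((0:ℝ), (1:ℝ))) := by rw [← hv]
    _ = v.1 • L (1, 0) + v.2 • L (0, 1) := by rw [map_add, map_smul, map_smul]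

theorem carrier_greenspan_linearization
    (Ω Ω' : Set (ℝ × ℝ)) (hΩ : IsOpen Ω) (hΩ' : IsOpen Ω')
    (c : ℝ → ℝ) (hc : ContDiff ℝ 1 c)
    (η u : ℝ × ℝ → ℝ)
    (hη : ContDiffOn ℝ 1 η Ω) (hu : ContDiffOn ℝ 1 u Ω)
    (hcontinuity : ∀ p ∈ Ω,
      fderiv ℝ η p (0, 1) + (1 + fderiv ℝ η p (1, 0)) * u p
        + c (p.1 + η p) * fderiv ℝ u p (1, 0) = 0)
    (hmomentum : ∀ p ∈ Ω,
      fderiv ℝ u p (0, 1) + u p * fderiv ℝ u p (1, 0) + fderiv ℝ η p (1, 0) = 0)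
    (Φ : ℝ × ℝ → ℝ × ℝ) (hΦ : ∀ p : ℝ × ℝ, Φ p = (p.1 + η p, p.2 - u p))
    (Ψ : ℝ × ℝ → ℝ × ℝ) (hΨ : ContDiffOn ℝ 1 Ψ Ω')
    (hΦmaps : Set.MapsTo Φ Ω Ω') (hΨmaps : Set.MapsTo Ψ Ω' Ω)
    (hleft : ∀ p ∈ Ω, Ψ (Φ p) = p) (hright : ∀ q ∈ Ω', Φ (Ψ q) = q)
    (φ ψ : ℝ × ℝ → ℝ)
    (hφ : ∀ p ∈ Ω, φ (Φ p) = u p)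
    (hψ : ∀ p ∈ Ω, ψ (Φ p) = η p + (u p) ^ 2 / 2) :
    ∀ q ∈ Ω',
      fderiv ℝ φ q (0, 1) + fderiv ℝ ψ q (1, 0) = 0 ∧
      fderiv ℝ ψ q (0, 1) + c q.1 * fderiv ℝ φ q (1, 0) + φ q = 0 := by
  intro q hq
  set p : ℝ × ℝ := Ψ q with hpdef
  have hpΩ : p ∈ Ω := hΨmaps hq
  have hΦp : Φ p = q := hright q hq
  -- differentiability
  have hηd : DifferentiableAt ℝ η p :=
    ((hη.differentiableOn one_ne_zero) p hpΩ).differentiableAt (hΩ.mem_nhds hpΩ)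
  have hud : DifferentiableAt ℝ u p :=
    ((hu.differentiableOn one_ne_zero) p hpΩ).differentiableAt (hΩ.mem_nhds hpΩ)
  have hΨd : DifferentiableAt ℝ Ψ q :=
    ((hΨ.differentiableOn one_ne_zero) q hq).differentiableAt (hΩ'.mem_nhds hq)
  set Dη : ℝ × ℝ →L[ℝ] ℝ := fderiv ℝ η p with hDη
  set Du : ℝ × ℝ →L[ℝ] ℝ := fderiv ℝ u p with hDu
  set DΨ : ℝ × ℝ →L[ℝ] ℝ × ℝ := fderiv ℝ Ψ q with hDΨ
  have hηd' : HasFDerivAt η Dη p := hηd.hasFDerivAt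
  have hud' : HasFDerivAt u Du p := hud.hasFDerivAt
  have hΨd' : HasFDerivAt Ψ DΨ q := hΨd.hasFDerivAt
  -- derivative of Φ
  set LΦ : ℝ × ℝ →L[ℝ] ℝ × ℝ :=
    ((ContinuousLinearMap.fst ℝ ℝ ℝ) + Dη).prod ((ContinuousLinearMap.snd ℝ ℝ ℝ) - Du) with hLΦ
  have hΦd : HasFDerivAt Φ LΦ p := by
    have h1 : HasFDerivAt (fun p' : ℝ × ℝ => p'.1 + η p')
        ((ContinuousLinearMap.fst ℝ ℝ ℝ) + Dη) p := hasFDerivAt_fst.add hηd'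
    have h2 : HasFDerivAt (fun p' : ℝ × ℝ => p'.2 - u p')
        ((ContinuousLinearMap.snd ℝ ℝ ℝ) - Du) p := hasFDerivAt_snd.sub hud'
    have hΦf : Φ = fun p' : ℝ × ℝ => (p'.1 + η p', p'.2 - u p') := funext hΦ
    rw [hΦf]
    exact h1.prodMk h2
  -- φ near q
  have hevφ : φ =ᶠ[nhds q] fun q' => u (Ψ q') := by
    filter_upwards [hΩ'.mem_nhds hq] with q' hq'
    have h := hφ (Ψ q') (hΨmaps hq')
    rwa [hright q' hq'] at h
  have hφd : HasFDerivAt (fun q' => u (Ψ q')) (Du.comp DΨ) q := hud'.comp q hΨd'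
  have hφfd : fderiv ℝ φ q = Du.comp DΨ := by
    rw [hevφ.fderiv_eq]; exact hφd.fderiv
  -- ψ near q
  have hevψ : ψ =ᶠ[nhds q] fun q' => η (Ψ q') + (1/2) * (u (Ψ q') * u (Ψ q')) := by
    filter_upwards [hΩ'.mem_nhds hq] with q' hq'
    have h := hψ (Ψ q') (hΨmaps hq')
    rw [hright q' hq'] at h
    rw [h]; ring
  have hψd : HasFDerivAt (fun q' => η (Ψ q') + (1/2) * (u (Ψ q') * u (Ψ q')))
      ((Dη.comp DΨ) + ((1:ℝ)/2) • (u p • (Du.comp DΨ) + u p • (Du.comp DΨ))) q :=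
    (hηd'.comp q hΨd').add ((hφd.mul hφd).const_mul (1/2))
  have hψfd : fderiv ℝ ψ q =
      (Dη.comp DΨ) + ((1:ℝ)/2) • (u p • (Du.comp DΨ) + u p • (Du.comp DΨ)) := by
    rw [hevψ.fderiv_eq]; exact hψd.fderiv
  -- the inverse-function identity
  have hcomp : LΦ.comp DΨ = ContinuousLinearMap.id ℝ (ℝ × ℝ) := by
    have hev : (fun q' => Φ (Ψ q')) =ᶠ[nhds q] id := by
      filter_upwards [hΩ'.mem_nhds hq] with q' hq'
      exact hright q' hq'
    have h1 : HasFDerivAt (fun q' => Φ (Ψ q')) (LΦ.comp DΨ) q := hΦd.comp q hΨd'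
    have h2 : fderiv ℝ (fun q' => Φ (Ψ q')) q = ContinuousLinearMap.id ℝ (ℝ × ℝ) := by
      rw [hev.fderiv_eq, fderiv_id]
    rw [← h2]; exact h1.fderiv.symm
  -- scalar quantities
  set E1 : ℝ := Dη (1, 0) with hE1d
  set E2 : ℝ := Dη (0, 1) with hE2d
  set U1 : ℝ := Du (1, 0) with hU1d
  set U2 : ℝ := Du (0, 1) with hU2d
  set w1 : ℝ × ℝ := DΨ (1, 0) with hw1
  set w2 : ℝ × ℝ := DΨ (0, 1) with hw2
  have hDηe : ∀ v : ℝ × ℝ, Dη v = v.1 * E1 + v.2 * E2 := by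
    intro v; rw [clm_eval Dη v]; simp [smul_eq_mul]; rfl
  have hDue : ∀ v : ℝ × ℝ, Du v = v.1 * U1 + v.2 * U2 := by
    intro v; rw [clm_eval Du v]; simp [smul_eq_mul]; rfl
  -- the four linear relations from LΦ ∘ DΨ = id
  have hid1 : LΦ w1 = (1, 0) := by
    have := congrArg (fun L : ℝ × ℝ →L[ℝ] ℝ × ℝ => L (1, 0)) hcomp
    simpa using this
  have hid2 : LΦ w2 = (0, 1) := by
    have := congrArg (fun L : ℝ × ℝ →L[ℝ] ℝ × ℝ => L (0, 1)) hcomp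
    simpa using this
  have hLΦe : ∀ v : ℝ × ℝ, LΦ v = (v.1 + Dη v, v.2 - Du v) := by
    intro v; rw [hLΦ]; rfl
  have hr1 : w1.1 + (w1.1 * E1 + w1.2 * E2) = 1 := by
    have h := hid1; rw [hLΦe w1, hDηe w1, hDue w1, Prod.ext_iff] at h
    exact h.1
  have hr2 : w1.2 - (w1.1 * U1 + w1.2 * U2) = 0 := by
    have h := hid1; rw [hLΦe w1, hDηe w1, hDue w1, Prod.ext_iff] at h
    exact h.2
  have hr3 : w2.1 + (w2.1 * E1 + w2.2 * E2) = 0 := by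
    have h := hid2; rw [hLΦe w2, hDηe w2, hDue w2, Prod.ext_iff] at h
    exact h.1
  have hr4 : w2.2 - (w2.1 * U1 + w2.2 * U2) = 1 := by
    have h := hid2; rw [hLΦe w2, hDηe w2, hDue w2, Prod.ext_iff] at h
    exact h.2
  -- PDEs at p, with σ = q.1
  have hq1 : q.1 = p.1 + η p := by rw [← hΦp, hΦ p]
  set cv : ℝ := c q.1 with hcv
  set up : ℝ := u p with hup
  have hr5 : E2 + (1 + E1) * up + cv * U1 = 0 := by
    have h := hcontinuity p hpΩ
    rw [hE2d, hE1d, hU1d, hcv, hq1, hup, hDη, hDu]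
    exact h
  have hr6 : U2 + up * U1 + E1 = 0 := by
    have h := hmomentum p hpΩ
    rw [hE1d, hU1d, hU2d, hup, hDη, hDu]
    linarith [h]
  -- abbreviations
  set A1 : ℝ := w1.1 with hA1d
  set B1 : ℝ := w1.2 with hB1d
  set A2 : ℝ := w2.1 with hA2d
  set B2 : ℝ := w2.2 with hB2d
  set K : ℝ := 1 - U2 - up * U1 with hKd
  set D : ℝ := K ^ 2 - cv * U1 ^ 2 with hDd
  have hE1' : E1 = -U2 - up * U1 := by linarith
  have hE2' : E2 = -K * up - cv * U1 := by
    linear_combination hr5 - up * hr6 + up * hKd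
  have hr1' : A1 * K - B1 * (K * up + cv * U1) = 1 := by
    linear_combination hr1 - A1 * hE1' - B1 * hE2' + A1 * hKd
  have hr3' : A2 * K - B2 * (K * up + cv * U1) = 0 := by
    linear_combination hr3 - A2 * hE1' - B2 * hE2' + A2 * hKd
  have hA1D : A1 * D = 1 - U2 := by
    linear_combination (1 - U2) * hr1' + (K * up + cv * U1) * hr2 + A1 * hDd + A1 * K * hKd
  have hB1D : B1 * D = U1 := by
    linear_combination U1 * hr1' + K * hr2 + B1 * hDd + B1 * K * hKd
  have hB2D : B2 * D = K := by
    linear_combination U1 * hr3' + K * hr4 + B2 * hDd + B2 * K * hKd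
  have hA2D : A2 * D = K * up + cv * U1 := by
    linear_combination (1 - U2) * hr3' + (K * up + cv * U1) * hr4 + A2 * hDd + A2 * K * hKd
  -- nondegeneracy of the Jacobian
  have hDne : D ≠ 0 := by
    intro hD0
    have hU1z : U1 = 0 := by rw [← hB1D, hD0, mul_zero]
    have hKz : K = 0 := by rw [← hB2D, hD0, mul_zero]
    rw [hU1z, hKz] at hr1'
    norm_num at hr1'
  -- the two linearized equations, scalar form
  have hX : A2 * U1 + B2 * U2 + (A1 * (E1 + up * U1) + B1 * (E2 + up * U2)) = 0 := by
    have hXD : (A2 * U1 + B2 * U2 + (A1 * (E1 + up * U1) + B1 * (E2 + up * U2))) * D = 0 := by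
      linear_combination U1 * hA2D + U2 * hB2D + (E1 + up * U1) * hA1D
        + (E2 + up * U2) * hB1D + (1 - U2) * hE1' + U1 * hE2' + U2 * hKd
    rcases mul_eq_zero.mp hXD with h | h
    · exact h
    · exact absurd h hDne
  have hY : A2 * (E1 + up * U1) + B2 * (E2 + up * U2) + cv * (A1 * U1 + B1 * U2) + up = 0 := by
    have hYD : (A2 * (E1 + up * U1) + B2 * (E2 + up * U2)
        + cv * (A1 * U1 + B1 * U2) + up) * D = 0 := by
      linear_combination (E1 + up * U1) * hA2D + (E2 + up * U2) * hB2D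
        + cv * U1 * hA1D + cv * U2 * hB1D + up * hDd
        + (K * up + cv * U1) * hE1' + K * hE2' - cv * U1 * hKd
    rcases mul_eq_zero.mp hYD with h | h
    · exact h
    · exact absurd h hDne
  -- evaluate the goal derivatives
  have hval1 : fderiv ℝ φ q (0, 1) = A2 * U1 + B2 * U2 := by
    rw [hφfd, ContinuousLinearMap.comp_apply, ← hw2, hDue w2, ← hA2d, ← hB2d]
  have hval2 : fderiv ℝ φ q (1, 0) = A1 * U1 + B1 * U2 := by
    rw [hφfd, ContinuousLinearMap.comp_apply, ← hw1, hDue w1, ← hA1d, ← hB1d]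
  have hval3 : fderiv ℝ ψ q (1, 0)
      = A1 * E1 + B1 * E2 + up * (A1 * U1 + B1 * U2) := by
    rw [hψfd]
    simp only [ContinuousLinearMap.add_apply, ContinuousLinearMap.smul_apply,
      ContinuousLinearMap.comp_apply, smul_eq_mul]
    rw [← hw1, hDηe w1, hDue w1, ← hA1d, ← hB1d]
    ring
  have hval4 : fderiv ℝ ψ q (0, 1)
      = A2 * E1 + B2 * E2 + up * (A2 * U1 + B2 * U2) := by
    rw [hψfd]
    simp only [ContinuousLinearMap.add_apply, ContinuousLinearMap.smul_apply,
      ContinuousLinearMap.comp_apply, smul_eq_mul]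
    rw [← hw2, hDηe w2, hDue w2, ← hA2d, ← hB2d]
    ring
  have hφq : φ q = up := by
    rw [← hΦp, hφ p hpΩ, hup]
  constructor
  · rw [hval1, hval3]
    linear_combination hX
  · rw [hval4, hval2, hφq]
    linear_combination hY
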